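/- Let a, b be real numbers with 0 < a < b and let r, ℓ be natural numbers. Then the discrete convolution of the sequences n ↦ a^n n^r and n ↦ b^n n^ℓ has the same complexity class as n ↦ b^n n^ℓ; explicitly, there exist real constants c₁, c₂ > 0 such that for all but finitely many n ∈ ℕ, c₁ b^n n^ℓ ≤ Σ_{s=0}^n a^s s^r b^{n−s} (n−s)^ℓ ≤ c₂ b^n n^ℓ. -/

import Mathlib

open Filter Finset

theorem conv_polyExp_lt (a b : ℝ) (ha : 0 < a) (hab : a < b) (r ℓ : ℕ) :
    ∃ c₁ c₂ : ℝ, 0 < c₁ ∧ 0 < c₂ ∧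
      ∀ᶠ n : ℕ in Filter.atTop,
        c₁ * (b ^ n * (n : ℝ) ^ ℓ) ≤
            ∑ s ∈ Finset.range (n + 1),
              a ^ s * (s : ℝ) ^ r * b ^ (n - s) * ((n - s : ℕ) : ℝ) ^ ℓ ∧
          ∑ s ∈ Finset.range (n + 1),
              a ^ s * (s : ℝ) ^ r * b ^ (n - s) * ((n - s : ℕ) : ℝ) ^ ℓ ≤
            c₂ * (b ^ n * (n : ℝ) ^ ℓ) := by
  have hb : 0 < b := ha.trans hab
  set q : ℝ := a / b with hq
  have hq0 : 0 < q := div_pos ha hb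
  have hq1 : q < 1 := (div_lt_one hb).2 hab
  have hsum : Summable (fun s : ℕ => (s : ℝ) ^ r * q ^ s) := by
    have := summable_pow_mul_geometric_of_norm_lt_one (k := r) (r := q)
      (by rw [Real.norm_eq_abs, abs_of_pos hq0]; exact hq1)
    exact this
  set C : ℝ := (∑' s : ℕ, (s : ℝ) ^ r * q ^ s) + 1 with hC
  have htnn : 0 ≤ ∑' s : ℕ, (s : ℝ) ^ r * q ^ s :=
    tsum_nonneg fun s => by positivity
  have hC0 : 0 < C := by linarith
  refine ⟨a / (b * 2 ^ ℓ), C, div_pos ha (by positivity), hC0, ?_⟩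
  filter_upwards [eventually_ge_atTop 2] with n hn
  constructor
  · -- lower bound
    obtain ⟨m, rfl⟩ : ∃ m, n = m + 2 := ⟨n - 2, by omega⟩
    have h1 : (1 : ℕ) ∈ Finset.range (m + 2 + 1) := by
      simp
    have hterm :
        a ^ 1 * ((1 : ℕ) : ℝ) ^ r * b ^ (m + 2 - 1) * ((m + 2 - 1 : ℕ) : ℝ) ^ ℓ ≤
        ∑ s ∈ Finset.range (m + 2 + 1),
          a ^ s * (s : ℝ) ^ r * b ^ (m + 2 - s) * ((m + 2 - s : ℕ) : ℝ) ^ ℓ :=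
      Finset.single_le_sum (f := fun s : ℕ => a ^ s * (s : ℝ) ^ r * b ^ (m + 2 - s : ℕ) * ((m + 2 - s : ℕ) : ℝ) ^ ℓ) (fun s _ => by positivity) h1
    refine le_trans ?_ hterm
    have hm1 : (m + 2 - 1 : ℕ) = m + 1 := rfl
    rw [hm1]
    push_cast
    rw [div_mul_eq_mul_div, div_le_iff₀ (by positivity)]
    have key : ((m : ℝ) + 2) ^ ℓ ≤ 2 ^ ℓ * ((m : ℝ) + 1) ^ ℓ := by
      rw [← mul_pow]
      apply pow_le_pow_left₀ (by positivity)
      have : (0:ℝ) ≤ (m:ℝ) := Nat.cast_nonneg m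
      linarith
    have hb1 : (0:ℝ) ≤ b ^ (m + 1) := by positivity
    calc a * (b ^ (m + 2) * ((m : ℝ) + 2) ^ ℓ)
        = (a * b ^ (m + 1) * b) * ((m : ℝ) + 2) ^ ℓ := by ring
      _ ≤ (a * b ^ (m + 1) * b) * (2 ^ ℓ * ((m : ℝ) + 1) ^ ℓ) := by
          apply mul_le_mul_of_nonneg_left key (by positivity)
      _ = a ^ 1 * 1 ^ r * b ^ (m + 1) * ((m : ℝ) + 1) ^ ℓ * (b * 2 ^ ℓ) := by ring
  · -- upper bound
    have step : ∀ s ∈ Finset.range (n + 1),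
        a ^ s * (s : ℝ) ^ r * b ^ (n - s) * ((n - s : ℕ) : ℝ) ^ ℓ ≤
        (s : ℝ) ^ r * q ^ s * (b ^ n * (n : ℝ) ^ ℓ) := by
      intro s hs
      have hsn : s ≤ n := by simpa [Nat.lt_succ_iff] using Finset.mem_range.1 hs
      have hbn : b ^ n = b ^ s * b ^ (n - s) := by
        rw [← pow_add, Nat.add_sub_cancel' hsn]
      have h2 : a ^ s * b ^ (n - s) = q ^ s * b ^ n := by
        rw [hbn, hq, div_pow]
        field_simp
      have h1 : ((n - s : ℕ) : ℝ) ^ ℓ ≤ (n : ℝ) ^ ℓ :=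
        pow_le_pow_left₀ (Nat.cast_nonneg _) (Nat.cast_le.2 (Nat.sub_le n s)) ℓ
      calc a ^ s * (s : ℝ) ^ r * b ^ (n - s) * ((n - s : ℕ) : ℝ) ^ ℓ
          ≤ a ^ s * (s : ℝ) ^ r * b ^ (n - s) * (n : ℝ) ^ ℓ := by
            apply mul_le_mul_of_nonneg_left h1 (by positivity)
        _ = (s : ℝ) ^ r * (a ^ s * b ^ (n - s)) * (n : ℝ) ^ ℓ := by ring
        _ = (s : ℝ) ^ r * q ^ s * (b ^ n * (n : ℝ) ^ ℓ) := by rw [h2]; ring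
    calc ∑ s ∈ Finset.range (n + 1),
          a ^ s * (s : ℝ) ^ r * b ^ (n - s) * ((n - s : ℕ) : ℝ) ^ ℓ
        ≤ ∑ s ∈ Finset.range (n + 1), (s : ℝ) ^ r * q ^ s * (b ^ n * (n : ℝ) ^ ℓ) :=
          Finset.sum_le_sum step
      _ = (∑ s ∈ Finset.range (n + 1), (s : ℝ) ^ r * q ^ s) * (b ^ n * (n : ℝ) ^ ℓ) := by
          rw [← Finset.sum_mul]
      _ ≤ C * (b ^ n * (n : ℝ) ^ ℓ) := by
          apply mul_le_mul_of_nonneg_right _ (by positivity)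
          have hle := Summable.sum_le_tsum (Finset.range (n + 1))
            (fun s _ => by positivity) hsum
          linarith
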